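/- Fix an integer N ≥ 2, L > 0, a := 1/N. Let x : [0,T) → ℝ^ℤ be any C¹ solution of the step-flow ODE system with x_i(0) < x_{i+1}(0) and x_{i+N}(0) = x_i(0) + L. Then there is a constant c > 0, depending only on N, L, and the initial energy E^N(x(0)), such that for every t ∈ [0,T), the minimal terrace width satisfies ℓ_min(t) := min_i ( x_{i+1}(t) − x_i(t) ) ≥ c. -/

import Mathlib

open Real Filter Topology

/-- The chemical potential `f_i` of a (periodic) step configuration `c : ℤ → ℝ`
(with `c (i+N) = c i + L`), `a := 1/N`; the lattice sum is over the period window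
`j ∈ {i+1, …, i+N−1}`, which by `π`-periodicity of `cot` agrees with `Σ_{j=1,j≠i}^N`. -/
noncomputable def fchem (N : ℕ) (L : ℝ) (c : ℤ → ℝ) (i : ℤ) : ℝ :=
  -(2 * π * (N:ℝ)⁻¹ / L ^ 2) *
      (∑ j ∈ Finset.Ico (i + 1) (i + (N:ℤ)), Real.cot (π * (c j - c i) / L))
    + (1 / (c (i + 1) - c i) - 1 / (c i - c (i - 1)))
    + ((N:ℝ)⁻¹ ^ 2 / (c (i + 1) - c i) ^ 3 - (N:ℝ)⁻¹ ^ 2 / (c i - c (i - 1)) ^ 3)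

/-- The right-hand side of the step-flow ODE system, `a = 1/N`. -/
noncomputable def Fvel (N : ℕ) (L : ℝ) (c : ℤ → ℝ) (i : ℤ) : ℝ :=
  (N:ℝ) * ((fchem N L c (i + 1) - fchem N L c i) / (c (i + 1) - c i)
    - (fchem N L c i - fchem N L c (i - 1)) / (c i - c (i - 1)))

/-- The discrete energy
`E^N(c) = a²·Σ_{1≤i<j≤N}(2/L)·ln|sin(π(c_j−c_i)/L)|
        + a·Σ_{i=1}^N(−ln((c_{i+1}−c_i)/a) + (a²/2)/(c_{i+1}−c_i)²)`, `a = 1/N`,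
with the convention `c_{N+1} = c_1 + L` (automatic for periodic configurations). -/
noncomputable def energyN (N : ℕ) (L : ℝ) (c : ℤ → ℝ) : ℝ :=
  (N:ℝ)⁻¹ ^ 2 * ∑ i ∈ Finset.Icc (1:ℤ) (N:ℤ), ∑ j ∈ Finset.Ioc i (N:ℤ),
      (2 / L) * Real.log |Real.sin (π * (c j - c i) / L)|
    + (N:ℝ)⁻¹ * ∑ i ∈ Finset.Icc (1:ℤ) (N:ℤ),
      (-Real.log ((c (i + 1) - c i) * (N:ℝ)) + ((N:ℝ)⁻¹ ^ 2 / 2) / (c (i + 1) - c i) ^ 2)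


lemma cot_add_pi (x : ℝ) : Real.cot (x + π) = Real.cot x := by
  simp [Real.cot_eq_cos_div_sin, Real.cos_add, Real.sin_add, neg_div_neg_eq]

lemma cot_neg' (x : ℝ) : Real.cot (-x) = - Real.cot x := by
  simp [Real.cot_eq_cos_div_sin, neg_div, div_neg]

lemma cot_sub_pi (x : ℝ) : Real.cot (x - π) = Real.cot x := by
  rw [← cot_add_pi (x - π)]; ring_nf

lemma sum_Ico_shift (F : ℤ → ℝ) (a b d : ℤ) :
    ∑ j ∈ Finset.Ico (a+d) (b+d), F j = ∑ j ∈ Finset.Ico a b, F (j+d) := by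
  rw [← Finset.map_add_right_Ico, Finset.sum_map]
  rfl

lemma Ico_succ_eq_Ioc (a b : ℤ) : Finset.Ico (a+1) (b+1) = Finset.Ioc a b := by
  ext j; simp [Finset.mem_Ico, Finset.mem_Ioc]

section Config
variable {N : ℕ} {L : ℝ} {c : ℤ → ℝ}

lemma cfg_per_k (hper : ∀ i, c (i + (N:ℤ)) = c i + L) :
    ∀ (k i : ℤ), c (i + k * N) = c i + k * L := by
  intro k
  induction k using Int.induction_on with
  | zero => simp
  | succ n ih =>
      intro i
      rw [show i + ((n:ℤ)+1) * N = i + (n:ℤ) * N + N by ring, hper, ih]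
      push_cast
      ring
  | pred n ih =>
      intro i
      have h := hper (i + (-(n:ℤ)-1) * N)
      rw [show i + (-(n:ℤ)-1) * N + (N:ℤ) = i + (-(n:ℤ)) * N by ring, ih] at h
      push_cast at h ⊢
      linarith [h]

lemma gap_per_k (hper : ∀ i, c (i + (N:ℤ)) = c i + L) (k i : ℤ) :
    c (i + k * N + 1) - c (i + k * N) = c (i + 1) - c i := by
  rw [show i + k * N + 1 = (i+1) + k * N by ring, cfg_per_k hper, cfg_per_k hper]
  ring

lemma index_reduce (hN : 0 < N) (i : ℤ) :
    ∃ i₀ ∈ Finset.Icc (1:ℤ) (N:ℤ), ∃ k : ℤ, i = i₀ + k * N := by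
  have hNz : (N:ℤ) ≠ 0 := by exact_mod_cast hN.ne'
  have h1 := Int.emod_nonneg (i-1) hNz
  have h2 := Int.emod_lt_of_pos (i-1) (Int.natCast_pos.mpr hN)
  have h3 := Int.mul_ediv_add_emod (i-1) (N:ℤ)
  refine ⟨(i-1) % N + 1, ?_, (i-1) / N, ?_⟩
  · simp only [Finset.mem_Icc]; omega
  · rw [mul_comm]; omega

lemma telescope_Icc (f : ℤ → ℝ) : ∀ n : ℕ,
    ∑ i ∈ Finset.Icc (1:ℤ) (n:ℤ), (f (i+1) - f i) = f ((n:ℤ)+1) - f 1 := by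
  intro n
  induction n with
  | zero => simp
  | succ m ih =>
      have hins : Finset.Icc (1:ℤ) ((m:ℤ)+1) = insert ((m:ℤ)+1) (Finset.Icc (1:ℤ) (m:ℤ)) := by
        ext j; simp [Finset.mem_Icc, Finset.mem_insert]; omega
      push_cast
      rw [hins, Finset.sum_insert (by simp), ih]
      ring

lemma sum_gaps (hper : ∀ i, c (i + (N:ℤ)) = c i + L) :
    ∑ i ∈ Finset.Icc (1:ℤ) (N:ℤ), (c (i+1) - c i) = L := by
  rw [telescope_Icc c N, show ((N:ℤ)+1) = 1 + (N:ℤ) by ring, hper 1]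
  ring

end Config
section Per
variable {N : ℕ} {L : ℝ} {c : ℤ → ℝ}

lemma fchem_per (hper : ∀ i, c (i + (N:ℤ)) = c i + L) (i : ℤ) :
    fchem N L c (i + (N:ℤ)) = fchem N L c i := by
  have e1 : c (i + (N:ℤ) + 1) = c (i+1) + L := by
    rw [show i + (N:ℤ) + 1 = (i+1) + (N:ℤ) by ring, hper]
  have e2 : c (i + (N:ℤ) - 1) = c (i-1) + L := by
    rw [show i + (N:ℤ) - 1 = (i-1) + (N:ℤ) by ring, hper]
  have hs : ∑ j ∈ Finset.Ico (i + (N:ℤ) + 1) (i + (N:ℤ) + (N:ℤ)),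
        Real.cot (π * (c j - c (i+(N:ℤ))) / L)
      = ∑ j ∈ Finset.Ico (i+1) (i+(N:ℤ)), Real.cot (π * (c j - c i) / L) := by
    rw [show i + (N:ℤ) + 1 = (i+1) + (N:ℤ) by ring,
        show i + (N:ℤ) + (N:ℤ) = (i + (N:ℤ)) + (N:ℤ) by ring, sum_Ico_shift]
    refine Finset.sum_congr rfl fun j _ => ?_
    rw [hper, hper]
    ring_nf
  rw [fchem, fchem, hs, e1, e2, hper]
  ring

lemma window_sum (hL : 0 < L) (hper : ∀ i, c (i + (N:ℤ)) = c i + L)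
    {i : ℤ} (hi : i ∈ Finset.Icc (1:ℤ) (N:ℤ)) :
    ∑ j ∈ Finset.Ico (i+1) (i+(N:ℤ)), Real.cot (π * (c j - c i) / L)
      = ∑ j ∈ Finset.Ioc i (N:ℤ), Real.cot (π * (c j - c i) / L)
        + ∑ j ∈ Finset.Ico 1 i, Real.cot (π * (c j - c i) / L) := by
  simp only [Finset.mem_Icc] at hi
  rw [← Finset.Ico_union_Ico_eq_Ico (show i+1 ≤ (N:ℤ)+1 by omega) (show (N:ℤ)+1 ≤ i+(N:ℤ) by omega),
      Finset.sum_union (Finset.Ico_disjoint_Ico_consecutive _ _ _), Ico_succ_eq_Ioc]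
  congr 1
  rw [show (N:ℤ)+1 = 1 + (N:ℤ) by ring, show i + (N:ℤ) = i + (N:ℤ) by rfl, sum_Ico_shift]
  refine Finset.sum_congr rfl fun j _ => ?_
  rw [hper, show π * (c j + L - c i) / L = π * (c j - c i) / L + π by field_simp; ring, cot_add_pi]

end Per

lemma sum_shift_one (F : ℤ → ℝ) (n : ℕ) (hn : 1 ≤ n) (hFper : F ((n:ℤ)+1) = F 1) :
    ∑ i ∈ Finset.Icc (1:ℤ) (n:ℤ), F (i+1) = ∑ i ∈ Finset.Icc (1:ℤ) (n:ℤ), F i := by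
  have h1 : ∑ i ∈ Finset.Icc (1:ℤ) (n:ℤ), F (i+1) = ∑ i ∈ Finset.Ico (2:ℤ) ((n:ℤ)+2), F i := by
    rw [show (n:ℤ)+2 = ((n:ℤ)+1)+1 by ring, show (2:ℤ) = 1+1 by ring, sum_Ico_shift,
        show Finset.Ico (1:ℤ) ((n:ℤ)+1) = Finset.Icc (1:ℤ) (n:ℤ) by
          ext j; simp [Finset.mem_Ico, Finset.mem_Icc]]
  have h2 : Finset.Ico (2:ℤ) ((n:ℤ)+2) = insert ((n:ℤ)+1) (Finset.Ico (2:ℤ) ((n:ℤ)+1)) := by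
    ext j; simp [Finset.mem_Ico, Finset.mem_insert]; omega
  have h3 : Finset.Icc (1:ℤ) (n:ℤ) = insert (1:ℤ) (Finset.Ico (2:ℤ) ((n:ℤ)+1)) := by
    ext j; simp [Finset.mem_Icc, Finset.mem_Ico, Finset.mem_insert]; omega
  rw [h1, h2, Finset.sum_insert (by simp), hFper]
  conv_rhs => rw [h3, Finset.sum_insert (by simp)]

section Ident
variable {N : ℕ} {L : ℝ} {c : ℤ → ℝ}

lemma cot_antisym (hL : 0 < L) (i j : ℤ) :
    Real.cot (π * (c i - c j) / L) = - Real.cot (π * (c j - c i) / L) := by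
  rw [show π * (c i - c j) / L = -(π * (c j - c i) / L) by ring, cot_neg']

lemma pairpart (hN : 1 ≤ N) (hL : 0 < L) (hper : ∀ i, c (i + (N:ℤ)) = c i + L) (v : ℤ → ℝ) :
    ∑ i ∈ Finset.Icc (1:ℤ) (N:ℤ), ∑ j ∈ Finset.Ioc i (N:ℤ),
        Real.cot (π * (c j - c i) / L) * (v j - v i)
      = ∑ i ∈ Finset.Icc (1:ℤ) (N:ℤ),
          v i * (-(∑ j ∈ Finset.Ico (i+1) (i+(N:ℤ)), Real.cot (π * (c j - c i) / L))) := by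
  have hsplit : ∀ i j : ℤ, Real.cot (π * (c j - c i) / L) * (v j - v i)
      = Real.cot (π * (c j - c i) / L) * v j - Real.cot (π * (c j - c i) / L) * v i := by
    intro i j; ring
  simp only [hsplit, Finset.sum_sub_distrib]
  have hswap : ∑ i ∈ Finset.Icc (1:ℤ) (N:ℤ), ∑ j ∈ Finset.Ioc i (N:ℤ),
        Real.cot (π * (c j - c i) / L) * v j
      = ∑ j ∈ Finset.Icc (1:ℤ) (N:ℤ), ∑ i ∈ Finset.Ico 1 j,
        Real.cot (π * (c j - c i) / L) * v j := by
    apply Finset.sum_comm'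
    intro i j
    simp only [Finset.mem_Icc, Finset.mem_Ioc, Finset.mem_Ico]
    omega
  rw [hswap]
  rw [← Finset.sum_sub_distrib]
  apply Finset.sum_congr rfl
  intro i hi
  rw [window_sum hL hper hi]
  have : ∑ x ∈ Finset.Ico 1 i, Real.cot (π * (c i - c x) / L) * v i
      = - ∑ j ∈ Finset.Ico 1 i, Real.cot (π * (c j - c i) / L) * v i := by
    rw [← Finset.sum_neg_distrib]
    apply Finset.sum_congr rfl
    intro j _
    rw [cot_antisym hL]
    ring
  rw [this, ← Finset.sum_mul, ← Finset.sum_mul]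
  ring

end Ident

lemma localpart (n : ℕ) (hn : 1 ≤ n) (h v : ℤ → ℝ)
    (hb : h (n:ℤ) * v ((n:ℤ)+1) = h 0 * v 1) :
    ∑ i ∈ Finset.Icc (1:ℤ) (n:ℤ), h i * (v (i+1) - v i)
      = ∑ i ∈ Finset.Icc (1:ℤ) (n:ℤ), (h (i-1) - h i) * v i := by
  have key : ∑ i ∈ Finset.Icc (1:ℤ) (n:ℤ), h i * v (i+1)
      = ∑ i ∈ Finset.Icc (1:ℤ) (n:ℤ), h (i-1) * v i := by
    have := sum_shift_one (fun i => h (i-1) * v i) n hn (by simpa using hb)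
    simpa using this
  simp only [mul_sub, sub_mul, Finset.sum_sub_distrib, key]

lemma abelpart (n : ℕ) (hn : 1 ≤ n) (f w : ℤ → ℝ)
    (hb : f ((n:ℤ)+1) * w (n:ℤ) = f 1 * w 0) :
    ∑ i ∈ Finset.Icc (1:ℤ) (n:ℤ), f i * w (i-1)
      = ∑ i ∈ Finset.Icc (1:ℤ) (n:ℤ), f (i+1) * w i := by
  have := sum_shift_one (fun i => f i * w (i-1)) n hn (by simpa using hb)
  simpa using this.symm

section Master
variable {N : ℕ} {L : ℝ} {c : ℤ → ℝ}

lemma identA (hN : 1 ≤ N) (hL : 0 < L) (hper : ∀ i, c (i + (N:ℤ)) = c i + L)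
    (v : ℤ → ℝ) (hv : ∀ i, v (i + (N:ℤ)) = v i) :
    (N:ℝ)⁻¹^2 * ∑ i ∈ Finset.Icc (1:ℤ) (N:ℤ), ∑ j ∈ Finset.Ioc i (N:ℤ),
        (2/L) * (π/L * Real.cot (π * (c j - c i) / L) * (v j - v i))
      + (N:ℝ)⁻¹ * ∑ i ∈ Finset.Icc (1:ℤ) (N:ℤ),
        (-((v (i+1) - v i) / (c (i+1) - c i))
          - (N:ℝ)⁻¹^2 * ((v (i+1) - v i) / (c (i+1) - c i)^3))
      = (N:ℝ)⁻¹ * ∑ i ∈ Finset.Icc (1:ℤ) (N:ℤ), fchem N L c i * v i := by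
  set a : ℝ := (N:ℝ)⁻¹ with ha
  set h : ℤ → ℝ := fun i => -(1 / (c (i+1) - c i)) - a^2 / (c (i+1) - c i)^3 with hh
  -- pair block
  have hpair : ∑ i ∈ Finset.Icc (1:ℤ) (N:ℤ), ∑ j ∈ Finset.Ioc i (N:ℤ),
        (2/L) * (π/L * Real.cot (π * (c j - c i) / L) * (v j - v i))
      = (2*π/L^2) * ∑ i ∈ Finset.Icc (1:ℤ) (N:ℤ),
          v i * (-(∑ j ∈ Finset.Ico (i+1) (i+(N:ℤ)), Real.cot (π * (c j - c i) / L))) := by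
    rw [← pairpart hN hL hper v, Finset.mul_sum]
    refine Finset.sum_congr rfl fun i _ => ?_
    rw [Finset.mul_sum]
    refine Finset.sum_congr rfl fun j _ => ?_
    field_simp
  -- local block
  have hb : h (N:ℤ) * v ((N:ℤ)+1) = h 0 * v 1 := by
    have hg : c ((N:ℤ)+1) - c (N:ℤ) = c (0+1) - c 0 := by
      rw [show (N:ℤ)+1 = 1 + (N:ℤ) by ring, hper 1, show (N:ℤ) = 0 + (N:ℤ) by ring, hper 0]
      ring
    have hv1 : v ((N:ℤ)+1) = v 1 := by
      rw [show (N:ℤ)+1 = 1 + (N:ℤ) by ring, hv 1]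
    rw [hv1, hh]
    simp only [hg]
  have hloc : ∑ i ∈ Finset.Icc (1:ℤ) (N:ℤ),
        (-((v (i+1) - v i) / (c (i+1) - c i))
          - a^2 * ((v (i+1) - v i) / (c (i+1) - c i)^3))
      = ∑ i ∈ Finset.Icc (1:ℤ) (N:ℤ), (h (i-1) - h i) * v i := by
    rw [← localpart N hN h v hb]
    refine Finset.sum_congr rfl fun i _ => ?_
    rw [hh]
    ring
  rw [hpair, hloc, ← mul_assoc, Finset.mul_sum, Finset.mul_sum, Finset.mul_sum,
      ← Finset.sum_add_distrib]
  refine Finset.sum_congr rfl fun i _ => ?_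
  set S := ∑ j ∈ Finset.Ico (i+1) (i+(N:ℤ)), Real.cot (π * (c j - c i) / L) with hS
  rw [fchem, hh, ← hS, ← ha]
  ring
end Master

section Diss
variable {N : ℕ} {L : ℝ} {c : ℤ → ℝ}

lemma Fvel_per (hper : ∀ i, c (i + (N:ℤ)) = c i + L) (i : ℤ) :
    Fvel N L c (i + (N:ℤ)) = Fvel N L c i := by
  have e1 : c (i + (N:ℤ) + 1) = c (i+1) + L := by
    rw [show i + (N:ℤ) + 1 = (i+1) + (N:ℤ) by ring, hper]
  have e2 : c (i + (N:ℤ) - 1) = c (i-1) + L := by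
    rw [show i + (N:ℤ) - 1 = (i-1) + (N:ℤ) by ring, hper]
  have f1 : fchem N L c (i + (N:ℤ) + 1) = fchem N L c (i+1) := by
    rw [show i + (N:ℤ) + 1 = (i+1) + (N:ℤ) by ring, fchem_per hper]
  have f2 : fchem N L c (i + (N:ℤ) - 1) = fchem N L c (i-1) := by
    rw [show i + (N:ℤ) - 1 = (i-1) + (N:ℤ) by ring, fchem_per hper]
  rw [Fvel, Fvel, f1, f2, fchem_per hper, e1, e2, hper]
  ring

lemma dissipation (hN : 1 ≤ N) (hper : ∀ i, c (i + (N:ℤ)) = c i + L) :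
    (N:ℝ)⁻¹ * ∑ i ∈ Finset.Icc (1:ℤ) (N:ℤ), fchem N L c i * Fvel N L c i
      = - ∑ i ∈ Finset.Icc (1:ℤ) (N:ℤ),
          (fchem N L c (i+1) - fchem N L c i)^2 / (c (i+1) - c i) := by
  have hNne : (N:ℝ) ≠ 0 := Nat.cast_ne_zero.mpr (by omega)
  set f := fchem N L c with hf
  set w : ℤ → ℝ := fun i => (f (i+1) - f i) / (c (i+1) - c i) with hw
  have hFv : ∀ i, Fvel N L c i = (N:ℝ) * (w i - w (i-1)) := by
    intro i
    rw [Fvel, hw]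
    simp only [sub_add_cancel]
    rfl
  have hfN : f ((N:ℤ)+1) = f 1 := by
    rw [hf, show (N:ℤ)+1 = 1 + (N:ℤ) by ring, fchem_per hper]
  have hf0 : f (N:ℤ) = f 0 := by
    rw [hf, show (N:ℤ) = 0 + (N:ℤ) by ring, fchem_per hper]
  have hg0 : c ((N:ℤ)+1) - c (N:ℤ) = c (0+1) - c 0 := by
    rw [show (N:ℤ)+1 = 1 + (N:ℤ) by ring, hper 1, show (N:ℤ) = 0 + (N:ℤ) by ring, hper 0]
    ring
  have hwN : w (N:ℤ) = w 0 := by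
    rw [hw]
    simp only
    rw [hfN, hf0, hg0]
    norm_num
  have habel := abelpart N hN f w (by rw [hfN, hwN])
  have hterm : ∀ i, (N:ℝ)⁻¹ * (f i * Fvel N L c i) = f i * w i - f i * w (i-1) := by
    intro i
    rw [hFv i]
    field_simp
  calc (N:ℝ)⁻¹ * ∑ i ∈ Finset.Icc (1:ℤ) (N:ℤ), f i * Fvel N L c i
      = ∑ i ∈ Finset.Icc (1:ℤ) (N:ℤ), (f i * w i - f i * w (i-1)) := by
        rw [Finset.mul_sum]; exact Finset.sum_congr rfl fun i _ => hterm i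
    _ = ∑ i ∈ Finset.Icc (1:ℤ) (N:ℤ), f i * w i
        - ∑ i ∈ Finset.Icc (1:ℤ) (N:ℤ), f i * w (i-1) := Finset.sum_sub_distrib _ _
    _ = ∑ i ∈ Finset.Icc (1:ℤ) (N:ℤ), f i * w i
        - ∑ i ∈ Finset.Icc (1:ℤ) (N:ℤ), f (i+1) * w i := by rw [habel]
    _ = - ∑ i ∈ Finset.Icc (1:ℤ) (N:ℤ), (f (i+1) - f i)^2 / (c (i+1) - c i) := by
        rw [← Finset.sum_sub_distrib, ← Finset.sum_neg_distrib]
        refine Finset.sum_congr rfl fun i _ => ?_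
        rw [hw]
        simp only
        ring
end Diss

section Chain
variable {N : ℕ} {L : ℝ}

lemma energy_hasDeriv {T t : ℝ} {x : ℝ → ℤ → ℝ}
    (hN : 1 ≤ N) (hL : 0 < L)
    (hm : ∀ i, x t i < x t (i+1)) (hper : ∀ i, x t (i + (N:ℤ)) = x t i + L)
    (v : ℤ → ℝ) (hv : ∀ i, HasDerivWithinAt (fun u => x u i) (v i) (Set.Ico (0:ℝ) T) t) :
    HasDerivWithinAt (fun u => energyN N L (x u))
      ((N:ℝ)⁻¹^2 * ∑ i ∈ Finset.Icc (1:ℤ) (N:ℤ), ∑ j ∈ Finset.Ioc i (N:ℤ),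
          (2/L) * (π/L * Real.cot (π * (x t j - x t i) / L) * (v j - v i))
        + (N:ℝ)⁻¹ * ∑ i ∈ Finset.Icc (1:ℤ) (N:ℤ),
          (-((v (i+1) - v i) / (x t (i+1) - x t i))
            - (N:ℝ)⁻¹^2 * ((v (i+1) - v i) / (x t (i+1) - x t i)^3)))
      (Set.Ico (0:ℝ) T) t := by
  have hmono : StrictMono (x t) := strictMono_int_of_lt_succ hm
  have hsinpos : ∀ i ∈ Finset.Icc (1:ℤ) (N:ℤ), ∀ j ∈ Finset.Ioc i (N:ℤ),
      0 < Real.sin (π * (x t j - x t i) / L) := by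
    intro i hi j hj
    simp only [Finset.mem_Icc] at hi
    simp only [Finset.mem_Ioc] at hj
    have h1 : 0 < x t j - x t i := sub_pos.mpr (hmono hj.1)
    have h2 : x t j - x t i < L := by
      have h3 : x t j < x t (i + (N:ℤ)) := hmono (by omega)
      rw [hper] at h3
      linarith
    apply Real.sin_pos_of_pos_of_lt_pi
    · positivity
    · have hdl : (x t j - x t i)/L < 1 := (div_lt_one hL).mpr h2
      calc π * (x t j - x t i) / L = π * ((x t j - x t i)/L) := by ring
        _ < π * 1 := mul_lt_mul_of_pos_left hdl Real.pi_pos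
        _ = π := mul_one π
  have hgapne : ∀ i : ℤ, x t (i+1) - x t i ≠ 0 := fun i => ne_of_gt (sub_pos.mpr (hm i))
  have hNne : (N:ℝ) ≠ 0 := Nat.cast_ne_zero.mpr (by omega)
  have hLne : L ≠ 0 := ne_of_gt hL
  have hS1 : HasDerivWithinAt
      (fun u => ∑ i ∈ Finset.Icc (1:ℤ) (N:ℤ), ∑ j ∈ Finset.Ioc i (N:ℤ),
          (2/L) * Real.log |Real.sin (π * (x u j - x u i) / L)|)
      (∑ i ∈ Finset.Icc (1:ℤ) (N:ℤ), ∑ j ∈ Finset.Ioc i (N:ℤ),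
          (2/L) * (π/L * Real.cot (π * (x t j - x t i) / L) * (v j - v i)))
      (Set.Ico (0:ℝ) T) t := by
    apply HasDerivWithinAt.fun_sum
    intro i hi
    apply HasDerivWithinAt.fun_sum
    intro j hj
    have hsin := hsinpos i hi j hj
    have hd : HasDerivWithinAt (fun u => π * (x u j - x u i) / L)
        (π * (v j - v i) / L) (Set.Ico (0:ℝ) T) t :=
      (((hv j).sub (hv i)).const_mul π).div_const L
    have hlog := (hd.sin).log (ne_of_gt hsin)
    have hfun : (fun u => (2/L) * Real.log |Real.sin (π * (x u j - x u i) / L)|)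
        = fun u => (2/L) * Real.log (Real.sin (π * (x u j - x u i) / L)) := by
      funext u; rw [Real.log_abs]
    rw [hfun]
    have hc := hlog.const_mul (2/L)
    refine hc.congr_deriv ?_
    rw [Real.cot_eq_cos_div_sin]
    field_simp
  have hS2 : HasDerivWithinAt
      (fun u => ∑ i ∈ Finset.Icc (1:ℤ) (N:ℤ),
          (-Real.log ((x u (i+1) - x u i) * (N:ℝ)) + ((N:ℝ)⁻¹^2/2) / (x u (i+1) - x u i)^2))
      (∑ i ∈ Finset.Icc (1:ℤ) (N:ℤ),
          (-((v (i+1) - v i) / (x t (i+1) - x t i))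
            - (N:ℝ)⁻¹^2 * ((v (i+1) - v i) / (x t (i+1) - x t i)^3)))
      (Set.Ico (0:ℝ) T) t := by
    apply HasDerivWithinAt.fun_sum
    intro i _
    have hg := (hv (i+1)).sub (hv i)
    have hgne := hgapne i
    have hlog := ((hg.mul_const (N:ℝ)).log (mul_ne_zero hgne hNne)).neg
    have hdiv := (hasDerivWithinAt_const t (Set.Ico (0:ℝ) T) ((N:ℝ)⁻¹^2/2)).div
      (hg.pow 2) (pow_ne_zero 2 hgne)
    have hc := hlog.add hdiv
    refine hc.congr_deriv ?_
    simp only [Pi.sub_apply, Pi.pow_apply]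
    norm_num
    field_simp
    ring
  have hfin := (hS1.const_mul ((N:ℝ)⁻¹^2)).add (hS2.const_mul ((N:ℝ)⁻¹))
  exact hfin

end Chain

noncomputable def lbound (N : ℕ) (L E₀ : ℝ) : ℝ :=
  min (min (L/2) ((N:ℝ)⁻¹^3 * L / 8))
      (Real.sqrt ((N:ℝ)⁻¹^3 /
        (4 * (|E₀ - ((2/L)*Real.log (2/L) - Real.log (L*(N:ℝ)))| + 1))))

lemma lbound_pos {N : ℕ} (hN : 1 ≤ N) {L : ℝ} (hL : 0 < L) (E₀ : ℝ) :
    0 < lbound N L E₀ := by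
  have hNpos : (0:ℝ) < (N:ℝ) := by exact_mod_cast hN
  apply lt_min
  · apply lt_min
    · linarith
    · positivity
  · apply Real.sqrt_pos.mpr
    positivity

lemma energy_lower {N : ℕ} (hN : 2 ≤ N) {L : ℝ} (hL : 0 < L) {c : ℤ → ℝ}
    (hm : ∀ i, c i < c (i+1)) (hper : ∀ i, c (i + (N:ℤ)) = c i + L)
    {E₀ : ℝ} (hE : energyN N L c ≤ E₀) :
    ∀ i ∈ Finset.Icc (1:ℤ) (N:ℤ), lbound N L E₀ ≤ c (i+1) - c i := by
  have hNpos : (0:ℝ) < (N:ℝ) := Nat.cast_pos.mpr (by omega)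
  have hNne : (N:ℝ) ≠ 0 := ne_of_gt hNpos
  have hmono : StrictMono c := strictMono_int_of_lt_succ hm
  set a : ℝ := (N:ℝ)⁻¹ with ha
  have hapos : 0 < a := by positivity
  set g : ℤ → ℝ := fun i => c (i+1) - c i with hg
  have hgpos : ∀ i, 0 < g i := fun i => sub_pos.mpr (hm i)
  set I := Finset.Icc (1:ℤ) (N:ℤ) with hI
  have h1I : (1:ℤ) ∈ I := by rw [hI]; simp only [Finset.mem_Icc]; omega
  have hIcard : (I.card : ℝ) = (N:ℝ) := by
    rw [hI, Int.card_Icc]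
    simp
  obtain ⟨im, himI, hmin⟩ := Finset.exists_min_image I g ⟨1, h1I⟩
  set ℓ := g im with hℓ
  have hℓpos : 0 < ℓ := hgpos im
  set δ := lbound N L E₀ with hδ
  by_cases hcase : δ ≤ ℓ
  · intro i hi; exact hcase.trans (hmin i hi)
  push_neg at hcase
  exfalso
  have hgsum : ∑ i ∈ I, g i = L := sum_gaps hper
  have hgleL : ∀ i ∈ I, g i ≤ L := by
    intro i hi
    rw [← hgsum]
    exact Finset.single_le_sum (fun j _ => (hgpos j).le) hi
  have hδle : δ ≤ L/2 := by
    rw [hδ, lbound]; exact le_trans (min_le_left _ _) (min_le_left _ _)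
  have hδle2 : δ ≤ a^3 * L / 8 := by
    rw [hδ, ha, lbound]; exact le_trans (min_le_left _ _) (min_le_right _ _)
  have hℓhalf : ℓ ≤ L/2 := (hcase.le).trans hδle
  have hsinb : ∀ i ∈ I, ∀ j ∈ Finset.Ioc i (N:ℤ),
      2*ℓ/L ≤ Real.sin (π * (c j - c i)/L) := by
    intro i hi j hj
    rw [hI] at hi
    simp only [Finset.mem_Icc] at hi
    simp only [Finset.mem_Ioc] at hj
    have hd1 : ℓ ≤ c j - c i := by
      have h1 : ℓ ≤ g i := hmin i (by rw [hI]; simp only [Finset.mem_Icc]; omega)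
      have h2 : c (i+1) ≤ c j := hmono.monotone (by omega)
      rw [hg] at h1
      simp only at h1
      linarith
    have hd2 : ℓ ≤ L - (c j - c i) := by
      have h1 : ℓ ≤ g j := hmin j (by rw [hI]; simp only [Finset.mem_Icc]; omega)
      have h2 : c (j+1) ≤ c (i + (N:ℤ)) := hmono.monotone (by omega)
      rw [hper] at h2
      rw [hg] at h1
      simp only at h1
      linarith
    rcases le_or_gt (c j - c i) (L/2) with hdc | hdc
    · have hd0 : (0:ℝ) ≤ c j - c i := by linarith
      have hx0 : 0 ≤ π * (c j - c i)/L :=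
        div_nonneg (mul_nonneg Real.pi_pos.le hd0) hL.le
      have hx1 : π * (c j - c i)/L ≤ π/2 := by
        rw [div_le_div_iff₀ hL (by norm_num : (0:ℝ) < 2)]
        nlinarith [Real.pi_pos]
      have hms := Real.mul_le_sin hx0 hx1
      calc 2*ℓ/L ≤ 2*(c j - c i)/L := by
            exact (div_le_div_iff_of_pos_right hL).mpr (by linarith)
        _ = 2/π * (π * (c j - c i)/L) := by
            field_simp
        _ ≤ Real.sin (π * (c j - c i)/L) := hms
    · have hd0 : (0:ℝ) ≤ L - (c j - c i) := by linarith
      have hx0 : 0 ≤ π * (L - (c j - c i))/L :=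
        div_nonneg (mul_nonneg Real.pi_pos.le hd0) hL.le
      have hx1 : π * (L - (c j - c i))/L ≤ π/2 := by
        rw [div_le_div_iff₀ hL (by norm_num : (0:ℝ) < 2)]
        nlinarith [Real.pi_pos]
      have hms := Real.mul_le_sin hx0 hx1
      have hsub : Real.sin (π * (L - (c j - c i))/L) = Real.sin (π * (c j - c i)/L) := by
        rw [show π * (L - (c j - c i))/L = π - π * (c j - c i)/L by field_simp,
          Real.sin_pi_sub]
      calc 2*ℓ/L ≤ 2*(L - (c j - c i))/L := by
            exact (div_le_div_iff_of_pos_right hL).mpr (by linarith)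
        _ = 2/π * (π * (L - (c j - c i))/L) := by field_simp
        _ ≤ Real.sin (π * (L - (c j - c i))/L) := hms
        _ = _ := hsub
  set b : ℝ := (2/L) * Real.log (2*ℓ/L) with hb
  have hbnp : b ≤ 0 :=
    mul_nonpos_of_nonneg_of_nonpos (by positivity)
      (Real.log_nonpos (by positivity) (by rw [div_le_one hL]; linarith))
  have hblock1 : b ≤ a^2 * ∑ i ∈ I, ∑ j ∈ Finset.Ioc i (N:ℤ),
      (2/L) * Real.log |Real.sin (π * (c j - c i)/L)| := by
    have hinner : ∀ i ∈ I, (N:ℝ) * b ≤ ∑ j ∈ Finset.Ioc i (N:ℤ),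
        (2/L) * Real.log |Real.sin (π * (c j - c i)/L)| := by
      intro i hi
      have hterm : ∀ j ∈ Finset.Ioc i (N:ℤ),
          b ≤ (2/L) * Real.log |Real.sin (π * (c j - c i)/L)| := by
        intro j hj
        have hs := hsinb i hi j hj
        have hspos : 0 < Real.sin (π * (c j - c i)/L) :=
          lt_of_lt_of_le (by positivity) hs
        rw [abs_of_pos hspos, hb]
        exact mul_le_mul_of_nonneg_left (Real.log_le_log (by positivity) hs) (by positivity)
      have hcard := Finset.card_nsmul_le_sum _ _ _ hterm
      rw [nsmul_eq_mul] at hcard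
      have hcle : ((Finset.Ioc i (N:ℤ)).card : ℝ) ≤ (N:ℝ) := by
        rw [hI] at hi
        simp only [Finset.mem_Icc] at hi
        rw [Int.card_Ioc]
        have h2 : ((N:ℤ) - i).toNat ≤ N := by omega
        exact_mod_cast h2
      exact le_trans (mul_le_mul_of_nonpos_right hcle hbnp) hcard
    have houter := Finset.card_nsmul_le_sum I _ _ hinner
    rw [nsmul_eq_mul, hIcard] at houter
    have hkey : a^2 * ((N:ℝ) * ((N:ℝ)*b)) = b := by
      rw [ha]; field_simp
    calc b = a^2 * ((N:ℝ) * ((N:ℝ)*b)) := hkey.symm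
      _ ≤ _ := mul_le_mul_of_nonneg_left houter (by positivity)
  have hblock2 : -Real.log (L*(N:ℝ)) + (a^3/2)/ℓ^2
      ≤ a * ∑ i ∈ I, (-Real.log ((g i)*(N:ℝ)) + (a^2/2)/(g i)^2) := by
    have hsplit : ∑ i ∈ I, (-Real.log ((g i)*(N:ℝ)) + (a^2/2)/(g i)^2)
        = ∑ i ∈ I, -Real.log ((g i)*(N:ℝ)) + ∑ i ∈ I, (a^2/2)/(g i)^2 :=
      Finset.sum_add_distrib
    have h21 : (N:ℝ) * (-Real.log (L*(N:ℝ))) ≤ ∑ i ∈ I, -Real.log ((g i)*(N:ℝ)) := by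
      have hterm : ∀ i ∈ I, -Real.log (L*(N:ℝ)) ≤ -Real.log ((g i)*(N:ℝ)) := by
        intro i hi
        have hpos : 0 < g i * (N:ℝ) := mul_pos (hgpos i) hNpos
        have := Real.log_le_log hpos (mul_le_mul_of_nonneg_right (hgleL i hi) hNpos.le)
        linarith
      have := Finset.card_nsmul_le_sum I _ _ hterm
      rwa [nsmul_eq_mul, hIcard] at this
    have h22 : (a^2/2)/ℓ^2 ≤ ∑ i ∈ I, (a^2/2)/(g i)^2 := by
      have := Finset.single_le_sum (f := fun i => (a^2/2)/(g i)^2)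
        (fun j _ => by positivity) himI
      rw [hℓ]
      exact this
    have hSig : (N:ℝ) * (-Real.log (L*(N:ℝ))) + (a^2/2)/ℓ^2
        ≤ ∑ i ∈ I, (-Real.log ((g i)*(N:ℝ)) + (a^2/2)/(g i)^2) := by
      rw [hsplit]; linarith
    calc -Real.log (L*(N:ℝ)) + (a^3/2)/ℓ^2
        = a * ((N:ℝ) * (-Real.log (L*(N:ℝ))) + (a^2/2)/ℓ^2) := by
          rw [ha]; field_simp
      _ ≤ _ := mul_le_mul_of_nonneg_left hSig hapos.le
  have htotal : b - Real.log (L*(N:ℝ)) + (a^3/2)/ℓ^2 ≤ energyN N L c := by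
    simp only [energyN, ← ha]
    have hb2 := hblock2
    rw [hg] at hb2
    simp only at hb2
    calc b - Real.log (L*(N:ℝ)) + (a^3/2)/ℓ^2
        = b + (-Real.log (L*(N:ℝ)) + (a^3/2)/ℓ^2) := by ring
      _ ≤ _ := add_le_add hblock1 hb2
  set C0 := (2/L)*Real.log (2/L) - Real.log (L*(N:ℝ)) with hC0
  have hlogℓ : 1 - 1/ℓ ≤ Real.log ℓ := by
    have h0 := Real.log_le_sub_one_of_pos (show 0 < ℓ⁻¹ by positivity)
    rw [Real.log_inv] at h0
    have h1 : (1:ℝ)/ℓ = ℓ⁻¹ := one_div ℓ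
    linarith
  have hbexp : (2/L)*Real.log (2/L) + (2/L)*(1 - 1/ℓ) ≤ b := by
    rw [hb, show 2*ℓ/L = (2/L)*ℓ by ring,
      Real.log_mul (by positivity) (ne_of_gt hℓpos), mul_add]
    have h2L : (0:ℝ) ≤ 2/L := by positivity
    have := mul_le_mul_of_nonneg_left hlogℓ h2L
    linarith only [this]
  have hstep : C0 + (a^3/4)/ℓ^2 ≤ energyN N L c := by
    have hsmall : (2/L)/ℓ ≤ (a^3/4)/ℓ^2 := by
      rw [div_le_div_iff₀ hℓpos (by positivity)]
      have hℓ8 : ℓ ≤ a^3*L/8 := le_trans hcase.le hδle2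
      have h1 : ℓ*ℓ ≤ (a^3*L/8)*ℓ := mul_le_mul_of_nonneg_right hℓ8 hℓpos.le
      calc 2/L * ℓ^2 = (2/L) * (ℓ*ℓ) := by ring
        _ ≤ (2/L) * ((a^3*L/8)*ℓ) := mul_le_mul_of_nonneg_left h1 (by positivity)
        _ = a^3/4 * ℓ := by field_simp; ring
    have hexp2 : (2/L)*(1 - 1/ℓ) = 2/L - (2/L)/ℓ := by ring
    have h2L : (0:ℝ) ≤ 2/L := by positivity
    have hq : (a^3/2)/ℓ^2 = (a^3/4)/ℓ^2 + (a^3/4)/ℓ^2 := by ring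
    rw [hC0]
    rw [hexp2] at hbexp
    linarith only [htotal, hbexp, hsmall, hq, h2L]
  have hMbig : |E₀ - C0| + 1 < (a^3/4)/ℓ^2 := by
    have hMpos : (0:ℝ) < |E₀ - C0| + 1 := by positivity
    have hδ3 : δ ≤ Real.sqrt (a^3 / (4*(|E₀ - C0| + 1))) := by
      rw [hδ, hC0, ha, lbound]
      exact min_le_right _ _
    have hℓsq : ℓ^2 < a^3/(4*(|E₀ - C0| + 1)) :=
      (Real.lt_sqrt hℓpos.le).mp (lt_of_lt_of_le hcase hδ3)
    rw [lt_div_iff₀ (by positivity)]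
    have hfe : (|E₀ - C0| + 1) * (a^3/(4*(|E₀ - C0| + 1))) = a^3/4 := by
      field_simp
    have hmul := mul_lt_mul_of_pos_left hℓsq hMpos
    rw [hfe] at hmul
    exact hmul
  clear_value a C0 ℓ b δ
  have hfinal : E₀ < energyN N L c := by
    have h1 : E₀ - C0 ≤ |E₀ - C0| := le_abs_self _
    linarith [hstep, hMbig, h1]
  linarith only [hE, hfinal]

/-- A lower bound for the minimal terrace width: there is `c > 0`,
depending only on `N`, `L` and the initial energy `E₀ = E^N(x(0))`, such that along any `C¹`
solution of the step-flow ODE system on `[0,T)` one has `x_{i+1}(t) − x_i(t) ≥ c` for all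
`t ∈ [0,T)` and all `i`. -/
theorem stmt_8 (N : ℕ) (hN : 2 ≤ N) (L : ℝ) (hL : 0 < L) (E₀ : ℝ) :
    ∃ c : ℝ, 0 < c ∧
      ∀ (T : ℝ) (x : ℝ → ℤ → ℝ),
        (∀ t ∈ Set.Ico (0:ℝ) T, ∀ i : ℤ, x t (i + (N:ℤ)) = x t i + L) →
        (∀ t ∈ Set.Ico (0:ℝ) T, ∀ i : ℤ, x t i < x t (i + 1)) →
        (∀ i : ℤ, ∀ t ∈ Set.Ico (0:ℝ) T,
          HasDerivWithinAt (fun s => x s i) (Fvel N L (x t) i) (Set.Ico 0 T) t) →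
        energyN N L (x 0) = E₀ →
        ∀ t ∈ Set.Ico (0:ℝ) T, ∀ i : ℤ, c ≤ x t (i + 1) - x t i := by
  refine ⟨lbound N L E₀, lbound_pos (by omega) hL E₀, ?_⟩
  intro T x hper hm hode hE0 t ht i
  have hT : 0 < T := lt_of_le_of_lt ht.1 ht.2
  have h0 : (0:ℝ) ∈ Set.Ico (0:ℝ) T := ⟨le_refl 0, hT⟩
  have hderiv : ∀ u ∈ Set.Ico (0:ℝ) T,
      HasDerivWithinAt (fun w => energyN N L (x w))
      (-(∑ j ∈ Finset.Icc (1:ℤ) (N:ℤ),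
        (fchem N L (x u) (j+1) - fchem N L (x u) j)^2 / (x u (j+1) - x u j)))
      (Set.Ico (0:ℝ) T) u := by
    intro u hu
    have h1 := energy_hasDeriv (N := N) (L := L) (by omega) hL (hm u hu) (hper u hu)
      (fun j => Fvel N L (x u) j) (fun j => hode j u hu)
    have h2 := identA (show 1 ≤ N by omega) hL (hper u hu) (fun j => Fvel N L (x u) j)
      (fun j => Fvel_per (hper u hu) j)
    have h3 := dissipation (show 1 ≤ N by omega) (hper u hu)
    exact (h2.trans h3) ▸ h1
  have hE_anti : ∀ u ∈ Set.Ico (0:ℝ) T,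
      energyN N L (x u) ≤ energyN N L (x 0) := by
    have hconv : Convex ℝ (Set.Ico (0:ℝ) T) := convex_Ico 0 T
    have hcont : ContinuousOn (fun w => energyN N L (x w)) (Set.Ico (0:ℝ) T) :=
      fun u hu => (hderiv u hu).continuousWithinAt
    have hint : interior (Set.Ico (0:ℝ) T) = Set.Ioo 0 T := interior_Ico
    have hkey : ∀ u ∈ interior (Set.Ico (0:ℝ) T),
        HasDerivAt (fun w => energyN N L (x w))
        (-(∑ j ∈ Finset.Icc (1:ℤ) (N:ℤ),
          (fchem N L (x u) (j+1) - fchem N L (x u) j)^2 / (x u (j+1) - x u j))) u := by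
      intro u hu
      rw [hint] at hu
      have hmem : Set.Ico (0:ℝ) T ∈ 𝓝 u :=
        Filter.mem_of_superset (Ioo_mem_nhds hu.1 hu.2) Set.Ioo_subset_Ico_self
      exact (hderiv u ⟨hu.1.le, hu.2⟩).hasDerivAt hmem
    have hanti := antitoneOn_of_deriv_nonpos hconv hcont
      (fun u hu => ((hkey u hu).differentiableAt).differentiableWithinAt)
      (fun u hu => by
        rw [(hkey u hu).deriv]
        have hu' : u ∈ Set.Ico (0:ℝ) T := by
          rw [hint] at hu; exact ⟨hu.1.le, hu.2⟩
        apply neg_nonpos_of_nonneg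
        apply Finset.sum_nonneg
        intro j _
        exact div_nonneg (sq_nonneg _) (sub_pos.mpr (hm u hu' j)).le)
    intro u hu
    exact hanti h0 hu hu.1
  have hEt : energyN N L (x t) ≤ E₀ := by
    calc energyN N L (x t) ≤ energyN N L (x 0) := hE_anti t ht
      _ = E₀ := hE0
  have hbound := energy_lower hN hL (hm t ht) (hper t ht) hEt
  obtain ⟨i₀, hi₀, k, hik⟩ := index_reduce (show 0 < N by omega) i
  have hb := hbound i₀ hi₀
  have hgp : x t (i+1) - x t i = x t (i₀+1) - x t i₀ := by
    rw [hik]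
    exact gap_per_k (hper t ht) k i₀
  rw [hgp]
  exact hb
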